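/- Let R be a ring, let G be a Gorenstein projective left R-module, and let S be a right R-module of finite flat dimension. Then Tor_1^R(S, G) = 0. More generally Tor_i^R(S, G) = 0 for all i ≥ 1. -/

import Mathlib

open CategoryTheory CategoryTheory.Limits

universe u

/-- `X` has injective dimension at most `n` in an abelian category. -/
def InjDimLE {C : Type*} [Category C] [Abelian C] : ℕ → C → Prop
  | 0, X => Injective X
  | n + 1, X => ∃ (I : C) (f : X ⟶ I), Injective I ∧ Mono f ∧ InjDimLE n (cokernel f)

/-- `S` has flat dimension at most `n`. -/
def FlatDimLE (R : Type u) [CommRing R] : ℕ → ModuleCat.{u} R → Prop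
  | 0, X => Module.Flat R X
  | n + 1, X => ∃ (P : ModuleCat.{u} R) (f : P ⟶ X),
      Module.Flat R P ∧ Epi f ∧ FlatDimLE R n (kernel f)

/-- A complex of projectives is totally acyclic if it is acyclic and stays
acyclic after applying `Hom(−, Q)` for every projective `Q`. -/
def IsTotallyAcyclicComplexOfProjectives {R : Type u} [CommRing R]
    (P : HomologicalComplex (ModuleCat.{u} R) (ComplexShape.up ℤ)) : Prop :=
  (∀ n : ℤ, Projective (P.X n)) ∧
  (∀ n : ℤ, P.ExactAt n) ∧
  (∀ (Q : ModuleCat.{u} R), Projective Q → ∀ n : ℤ,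
    Function.Exact (fun g : P.X (n + 1) ⟶ Q => P.d n (n + 1) ≫ g)
      (fun g : P.X n ⟶ Q => P.d (n - 1) n ≫ g))

/-- `G` is Gorenstein projective: a cycle module of a totally acyclic complex
of projectives. -/
def IsGorensteinProjective {R : Type u} [CommRing R] (G : ModuleCat.{u} R) : Prop :=
  ∃ P : HomologicalComplex (ModuleCat.{u} R) (ComplexShape.up ℤ),
    IsTotallyAcyclicComplexOfProjectives P ∧ Nonempty (G ≅ P.cycles 0)

/-! ### Auxiliary material -/

section Tensor

open LinearMap TensorProduct

variable (R : Type u) [CommRing R]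

/-- Tensoring with `S` on the left preserves exactness of `ℤ`-indexed complexes of
flat modules. -/
def GoodTensor (S : Type u) [AddCommGroup S] [Module R S] : Prop :=
  ∀ (M : ℤ → Type u) [∀ n, AddCommGroup (M n)] [∀ n, Module R (M n)]
    (d : ∀ n : ℤ, M n →ₗ[R] M (n + 1)),
    (∀ n, Module.Flat R (M n)) →
    (∀ n, Function.Exact (d n) (d (n + 1))) →
    ∀ n, Function.Exact ((d n).lTensor S) ((d (n + 1)).lTensor S)

variable {R}

lemma goodTensor_of_flat (S : Type u) [AddCommGroup S] [Module R S] [Module.Flat R S] :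
    GoodTensor R S := by
  intro M _ _ d _ hd n
  exact Module.Flat.lTensor_exact S (hd n)

lemma goodTensor_of_ses {K F S : Type u}
    [AddCommGroup K] [Module R K] [AddCommGroup F] [Module R F]
    [AddCommGroup S] [Module R S]
    (ι : K →ₗ[R] F) (p : F →ₗ[R] S)
    (hι : Function.Injective ι) (hp : Function.Surjective p)
    (he : Function.Exact ι p)
    (hK : GoodTensor R K) (hF : GoodTensor R F) : GoodTensor R S := by
  intro M _ _ d hflat hd n
  intro x
  constructor
  · intro hx
    -- lift x along p ⊗ id
    obtain ⟨y, hy⟩ := rTensor_surjective (M (n + 1)) hp x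
    have h2 : p.rTensor (M (n + 1 + 1)) ((d (n + 1)).lTensor F y) = 0 := by
      rw [← LinearMap.comp_apply, rTensor_comp_lTensor, ← lTensor_comp_rTensor,
        LinearMap.comp_apply, hy, hx]
    obtain ⟨z, hz⟩ := (rTensor_exact (M (n + 1 + 1)) he hp _).mp h2
    have h3 : ι.rTensor (M (n + 1 + 1 + 1)) ((d (n + 1 + 1)).lTensor K z) = 0 := by
      rw [← LinearMap.comp_apply, rTensor_comp_lTensor, ← lTensor_comp_rTensor,
        LinearMap.comp_apply, hz, ← LinearMap.comp_apply, ← lTensor_comp]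
      have hzero : (d (n + 1 + 1)).comp (d (n + 1)) = 0 := by
        ext a; exact (hd (n + 1)).apply_apply_eq_zero a
      rw [hzero, lTensor_zero, LinearMap.zero_apply]
    have h4 : (d (n + 1 + 1)).lTensor K z = 0 := by
      haveI := hflat (n + 1 + 1 + 1)
      exact Module.Flat.rTensor_preserves_injective_linearMap ι hι
        (by rw [h3, map_zero])
    obtain ⟨w, hw⟩ := (hK M d hflat hd (n + 1) z).mp h4
    have h5 : (d (n + 1)).lTensor F (y - ι.rTensor (M (n + 1)) w) = 0 := by
      rw [map_sub, ← LinearMap.comp_apply, lTensor_comp_rTensor, ← rTensor_comp_lTensor,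
        LinearMap.comp_apply, hw, hz, sub_self]
    obtain ⟨v, hv⟩ := (hF M d hflat hd n _).mp h5
    refine ⟨p.rTensor (M n) v, ?_⟩
    have h6 : (d n).lTensor S (p.rTensor (M n) v) =
        p.rTensor (M (n + 1)) ((d n).lTensor F v) := by
      rw [← LinearMap.comp_apply, lTensor_comp_rTensor, ← rTensor_comp_lTensor,
        LinearMap.comp_apply]
    rw [h6, hv, map_sub, hy, ← LinearMap.comp_apply, ← rTensor_comp]
    have hpι : p.comp ι = 0 := by
      ext a; exact he.apply_apply_eq_zero a
    rw [hpι, rTensor_zero, LinearMap.zero_apply, sub_zero]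
  · rintro ⟨y, rfl⟩
    rw [← LinearMap.comp_apply, ← lTensor_comp]
    have hzero : (d (n + 1)).comp (d n) = 0 := by
      ext a; exact (hd n).apply_apply_eq_zero a
    rw [hzero, lTensor_zero, LinearMap.zero_apply]

lemma goodTensor_of_flatDimLE :
    ∀ (n : ℕ) (S : ModuleCat.{u} R), FlatDimLE R n S → GoodTensor R S
  | 0, S, h => by
    haveI : Module.Flat R S := h
    exact goodTensor_of_flat S
  | n + 1, S, ⟨F, p, hF, hepi, hker⟩ => by
    haveI : Module.Flat R F := hF
    have hKgood : GoodTensor R ↥(kernel p) := goodTensor_of_flatDimLE n _ hker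
    refine goodTensor_of_ses (kernel.ι p).hom p.hom ?_ ?_ ?_ hKgood (goodTensor_of_flat F)
    · exact (ModuleCat.mono_iff_injective _).1 inferInstance
    · exact (ModuleCat.epi_iff_surjective _).1 hepi
    · have hex : (ShortComplex.mk (kernel.ι p) p (kernel.condition p)).Exact :=
        ShortComplex.exact_of_f_is_kernel _ (kernelIsKernel p)
      rw [ShortComplex.moduleCat_exact_iff] at hex
      intro x
      constructor
      · intro hx
        obtain ⟨y, hy⟩ := hex x hx
        exact ⟨y, hy⟩
      · rintro ⟨y, rfl⟩
        calc p (kernel.ι p y) = (kernel.ι p ≫ p) y := rfl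
          _ = 0 := by rw [kernel.condition]; rfl

end Tensor

section Complex

variable {R : Type u} [CommRing R]
variable (P : HomologicalComplex (ModuleCat.{u} R) (ComplexShape.up ℤ))

lemma complex_exact_fun (hex : ∀ n : ℤ, P.ExactAt n) {a b c : ℤ}
    (hab : a + 1 = b) (hbc : b + 1 = c) :
    Function.Exact (P.d a b) (P.d b c) := by
  have h := (HomologicalComplex.exactAt_iff' P a b c
      ((ComplexShape.up ℤ).prev_eq' hab) ((ComplexShape.up ℤ).next_eq' hbc)).1 (hex b)
  rw [ShortComplex.moduleCat_exact_iff] at h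
  intro x
  constructor
  · intro hx
    obtain ⟨y, hy⟩ := h x hx
    exact ⟨y, hy⟩
  · rintro ⟨y, rfl⟩
    calc P.d b c (P.d a b y) = (P.d a b ≫ P.d b c) y := rfl
      _ = 0 := by rw [P.d_comp_d]; rfl

/-- The projective resolution of `P.cycles 0` obtained from the left half of the
acyclic complex `P`. -/
noncomputable def resComplex : ChainComplex (ModuleCat.{u} R) ℕ :=
  ChainComplex.of (fun i => P.X (-(i : ℤ) - 1))
    (fun i => P.d (-((i + 1 : ℕ) : ℤ) - 1) (-(i : ℤ) - 1))
    (fun _ => P.d_comp_d _ _ _)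

lemma resComplex_d (n : ℕ) :
    (resComplex P).d (n + 1) n = P.d (-((n + 1 : ℕ) : ℤ) - 1) (-(n : ℤ) - 1) :=
  ChainComplex.of_d (V := ModuleCat.{u} R) (fun i : ℕ => P.X (-(i : ℤ) - 1))
    (fun i => P.d (-((i + 1 : ℕ) : ℤ) - 1) (-(i : ℤ) - 1)) n

lemma resComplex_exactAt (hex : ∀ n : ℤ, P.ExactAt n) (n : ℕ) :
    (resComplex P).ExactAt (n + 1) := by
  rw [HomologicalComplex.exactAt_iff' _ (n + 1 + 1) (n + 1) n (by simp) (by simp)]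
  rw [ShortComplex.moduleCat_exact_iff]
  intro x hx
  have e1 := resComplex_d P (n + 1)
  have e2 := resComplex_d P n
  dsimp only [HomologicalComplex.sc', HomologicalComplex.shortComplexFunctor'] at hx ⊢
  rw [e2] at hx
  rw [e1]
  exact (complex_exact_fun P hex (a := -((n+1+1 : ℕ) : ℤ) - 1)
    (by omega) (by omega) x).mp hx

noncomputable def resPiZero : (resComplex P).X 0 ⟶ P.cycles 0 :=
  P.toCycles (-((0 : ℕ) : ℤ) - 1) 0

lemma resPiZero_cond : (resComplex P).d 1 0 ≫ resPiZero P = 0 := by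
  have e1 := resComplex_d P 0
  rw [show (1 : ℕ) = 0 + 1 from rfl, e1]
  dsimp only [resPiZero]
  show P.d (-((0 + 1 : ℕ) : ℤ) - 1) (-((0 : ℕ) : ℤ) - 1) ≫ P.toCycles (-((0 : ℕ) : ℤ) - 1) 0 = 0
  rw [← cancel_mono (P.iCycles 0), Category.assoc, HomologicalComplex.toCycles_i,
    HomologicalComplex.d_comp_d, zero_comp]

lemma resPiZero_epi (hex : ∀ n : ℤ, P.ExactAt n) : Epi (resPiZero P) := by
  rw [ModuleCat.epi_iff_surjective]
  intro c
  have hc : P.d 0 1 (P.iCycles 0 c) = 0 := by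
    calc P.d 0 1 (P.iCycles 0 c) = (P.iCycles 0 ≫ P.d 0 1) c := rfl
      _ = 0 := by rw [P.iCycles_d]; rfl
  obtain ⟨y, hy⟩ := (complex_exact_fun P hex (a := -((0 : ℕ) : ℤ) - 1) (b := 0) (c := 1)
    (by omega) rfl _).mp hc
  refine ⟨y, ?_⟩
  have hinj : Function.Injective (P.iCycles 0) :=
    (ModuleCat.mono_iff_injective _).1 inferInstance
  apply hinj
  calc P.iCycles 0 (resPiZero P y) = (P.toCycles (-((0 : ℕ) : ℤ) - 1) 0 ≫ P.iCycles 0) y := rfl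
    _ = P.d (-((0 : ℕ) : ℤ) - 1) 0 y := by rw [HomologicalComplex.toCycles_i]
    _ = P.iCycles 0 c := hy

lemma resPiZero_exact (hex : ∀ n : ℤ, P.ExactAt n) :
    (ShortComplex.mk _ _ (resPiZero_cond P)).Exact := by
  rw [ShortComplex.moduleCat_exact_iff]
  intro x hx
  have hd : P.d (-((0 : ℕ) : ℤ) - 1) 0 x = 0 := by
    calc P.d (-((0 : ℕ) : ℤ) - 1) 0 x
        = (P.toCycles (-((0 : ℕ) : ℤ) - 1) 0 ≫ P.iCycles 0) x := by
          rw [HomologicalComplex.toCycles_i]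
      _ = P.iCycles 0 (resPiZero P x) := rfl
      _ = 0 := by rw [show resPiZero P x = 0 from hx, map_zero]
  obtain ⟨y, hy⟩ := (complex_exact_fun P hex (a := -((0 + 1 : ℕ) : ℤ) - 1)
    (b := -((0 : ℕ) : ℤ) - 1) (c := 0) (by omega) (by omega) x).mp hd
  refine ⟨y, ?_⟩
  show ((resComplex P).d (0 + 1) 0) y = x
  rw [resComplex_d P 0]
  exact hy

/-- The resolution of `P.cycles 0` as a `ProjectiveResolution`. -/
noncomputable def resolution (hproj : ∀ n : ℤ, Projective (P.X n))
    (hex : ∀ n : ℤ, P.ExactAt n) : ProjectiveResolution (P.cycles 0) where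
  complex := resComplex P
  projective n := hproj _
  π := (ChainComplex.toSingle₀Equiv _ _).symm ⟨resPiZero P, resPiZero_cond P⟩
  quasiIso := ⟨fun n => by
    cases n with
    | zero =>
      rw [ChainComplex.quasiIsoAt₀_iff, ShortComplex.quasiIso_iff_of_zeros']
      · refine (ShortComplex.exact_and_epi_g_iff_of_iso ?_).2
          ⟨resPiZero_exact P hex, resPiZero_epi P hex⟩
        refine ShortComplex.isoMk (Iso.refl _) (Iso.refl _) (Iso.refl _) ((Category.id_comp _).trans (Category.comp_id _).symm) ?_
        dsimp
        refine (Category.id_comp _).trans (Eq.trans ?_ (Category.comp_id _).symm)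
        exact (ChainComplex.toSingle₀Equiv_symm_apply_f_zero (resPiZero P) (resPiZero_cond P)).symm
      all_goals rfl
    | succ n =>
      rw [quasiIsoAt_iff_exactAt']
      · exact resComplex_exactAt P hex n
      · apply ChainComplex.exactAt_succ_single_obj⟩

end Complex

section Main

open CategoryTheory.MonoidalCategory

variable {R : Type u} [CommRing R]

lemma flat_of_projective_module (M : ModuleCat.{u} R) [h : Projective M] :
    Module.Flat R M := by
  haveI : Module.Projective R M := by
    rw [IsProjective.iff_projective.{u, u}]
    exact h
  infer_instance

lemma tensor_exact_fun (S : ModuleCat.{u} R) (hgood : GoodTensor R S)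
    (P : HomologicalComplex (ModuleCat.{u} R) (ComplexShape.up ℤ))
    (hproj : ∀ n : ℤ, Projective (P.X n)) (hex : ∀ n : ℤ, P.ExactAt n)
    {a b c : ℤ} (hab : a + 1 = b) (hbc : b + 1 = c) :
    Function.Exact ((P.d a b).hom.lTensor S) ((P.d b c).hom.lTensor S) := by
  subst hab
  subst hbc
  exact hgood (fun n => ↥(P.X n)) (fun n => (P.d n (n + 1)).hom)
    (fun n => haveI := hproj n; flat_of_projective_module (P.X n))
    (fun n => complex_exact_fun P hex rfl rfl) a

lemma mapped_exactAt (S : ModuleCat.{u} R) (hgood : GoodTensor R S)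
    (P : HomologicalComplex (ModuleCat.{u} R) (ComplexShape.up ℤ))
    (hproj : ∀ n : ℤ, Projective (P.X n)) (hex : ∀ n : ℤ, P.ExactAt n) (n : ℕ) :
    (((((tensoringLeft (ModuleCat.{u} R)).obj S).mapHomologicalComplex
      (ComplexShape.down ℕ)).obj (resComplex P)).ExactAt (n + 1)) := by
  rw [HomologicalComplex.exactAt_iff' _ (n + 1 + 1) (n + 1) n (by simp) (by simp)]
  rw [ShortComplex.moduleCat_exact_iff]
  intro x hx
  have e1 := resComplex_d P (n + 1)
  have e2 := resComplex_d P n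
  dsimp only [HomologicalComplex.sc', HomologicalComplex.shortComplexFunctor',
    Functor.mapHomologicalComplex_obj_d] at hx ⊢
  have hx' : ((resComplex P).d (n + 1) n).hom.lTensor S x = 0 := hx
  rw [e2] at hx'
  show ∃ y, ((resComplex P).d (n + 1 + 1) (n + 1)).hom.lTensor S y = x
  rw [e1]
  exact (tensor_exact_fun S hgood P hproj hex (a := -((n+1+1 : ℕ) : ℤ) - 1)
    (by omega) (by omega) x).mp hx'

end Main

/-- Let `R` be an (Iwanaga–Gorenstein, commutative) ring, `G`
a Gorenstein projective `R`-module and `S` an `R`-module of finite flat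
dimension.  Then `Tor_i^R(S, G) = 0` for all `i ≥ 1`. -/
theorem tor_isZero_of_gorensteinProjective_of_finite_flatDim
    (R : Type u) [CommRing R] [IsNoetherianRing R]
    (hGor : ∃ n, InjDimLE n (ModuleCat.of R R))
    (S G : ModuleCat.{u} R)
    (hG : IsGorensteinProjective G) (hS : ∃ n, FlatDimLE R n S) :
    ∀ i : ℕ, 1 ≤ i → IsZero (((Tor (ModuleCat.{u} R) i).obj S).obj G) := by
  obtain ⟨P, ⟨hproj, hex, -⟩, ⟨e⟩⟩ := hG
  obtain ⟨m, hm⟩ := hS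
  intro i hi
  obtain ⟨j, rfl⟩ : ∃ j, i = j + 1 := ⟨i - 1, by omega⟩
  have hgood : GoodTensor R ↥S := goodTensor_of_flatDimLE m S hm
  let F := (MonoidalCategory.tensoringLeft (ModuleCat.{u} R)).obj S
  refine IsZero.of_iso ?_
    (((F.leftDerived (j + 1)).mapIso e) ≪≫
      (resolution P hproj hex).isoLeftDerivedObj F (j + 1))
  have := (HomologicalComplex.exactAt_iff_isZero_homology
    (K := (F.mapHomologicalComplex (ComplexShape.down ℕ)).obj (resComplex P)) (i := j + 1)).1
    (mapped_exactAt S hgood P hproj hex j)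
  exact this
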